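/- arXiv:2012.15457 — 2 statements merged into one kernel-verified Lean document; each statement's English description precedes it below -/
import Mathlib

section
/- Let f_0,...,f_{m-1} be homeomorphisms of a compact metric space (X,d) and φ continuous on X. Then the topological pressure of the free semigroup action generated by f_0,...,f_{m-1} with potential φ equals the topological pressure of the free semigroup action generated by the inverses: P(f_0,...,f_{m-1},φ) = P(f_0^{-1},...,f_{m-1}^{-1},φ). -/
open Filter Topology

section FSG

variable {X : Type*}

/-- Apply the maps of the free semigroup action along a word; the first letter of the
list is applied first. -/
def fw {ι : Type*} (f : ι → X → X) (w : List ι) (x : X) : X :=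
  w.foldl (fun y a => f a y) x

/-- The Birkhoff-type sum `(S_w φ)(x) = ∑_{w' ≤ w} φ(f_{w'} x)`. -/
noncomputable def Sw {ι : Type*} (f : ι → X → X) (φ : X → ℝ) (w : List ι) (x : X) : ℝ :=
  ∑ i ∈ Finset.range w.length, φ (fw f (w.take i) x)

variable [MetricSpace X]

/-- `F` is a `(w, ε, r)`-spanning set for the free semigroup action. -/
def rSpan {ι : Type*} (f : ι → X → X) (w : List ι) (ε r : ℝ) (F : Finset X) : Prop :=
  ∀ x : X, ∃ y ∈ F, (1 - r) * w.length <
    (((Finset.range w.length).filter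
      (fun i => dist (fw f (w.take i) x) (fw f (w.take i) y) < ε)).card : ℝ)

/-- `E` is a `(w, ε, r)`-separated set for the free semigroup action. -/
def rSep {ι : Type*} (f : ι → X → X) (w : List ι) (ε r : ℝ) (E : Finset X) : Prop :=
  ∀ x ∈ E, ∀ y ∈ E, x ≠ y → r * w.length <
    (((Finset.range w.length).filter
      (fun i => ε ≤ dist (fw f (w.take i) x) (fw f (w.take i) y))).card : ℝ)

/-- `Q_w(f_0,…,f_{m-1},φ,ε,r)` (spanning-set version). -/
noncomputable def Qw {ι : Type*} (f : ι → X → X) (φ : X → ℝ) (w : List ι) (ε r : ℝ) : ℝ :=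
  sInf {s : ℝ | ∃ F : Finset X, rSpan f w ε r F ∧ s = ∑ x ∈ F, Real.exp (Sw f φ w x)}

/-- `Q_w^s(f_0,…,f_{m-1},φ,ε,r)` (separated-set version). -/
noncomputable def Qws {ι : Type*} (f : ι → X → X) (φ : X → ℝ) (w : List ι) (ε r : ℝ) : ℝ :=
  sSup {s : ℝ | ∃ E : Finset X, rSep f w ε r E ∧ s = ∑ x ∈ E, Real.exp (Sw f φ w x)}

/-- `Q_n(f_0,…,f_{m-1},φ,ε,r) = (1/m^n) ∑_{|w|=n} Q_w`. -/
noncomputable def Qn {ι : Type*} [Fintype ι] (f : ι → X → X) (φ : X → ℝ)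
    (n : ℕ) (ε r : ℝ) : ℝ :=
  (1 / (Fintype.card ι : ℝ) ^ n) * ∑ σ : Fin n → ι, Qw f φ (List.ofFn σ) ε r

/-- `Q_n^s(f_0,…,f_{m-1},φ,ε,r) = (1/m^n) ∑_{|w|=n} Q_w^s`. -/
noncomputable def Qns {ι : Type*} [Fintype ι] (f : ι → X → X) (φ : X → ℝ)
    (n : ℕ) (ε r : ℝ) : ℝ :=
  (1 / (Fintype.card ι : ℝ) ^ n) * ∑ σ : Fin n → ι, Qws f φ (List.ofFn σ) ε r

/-- The topological `r`-pressure of the free semigroup action (spanning sets);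
the limit as `ε → 0` is realised as a supremum over `ε > 0`, the quantity being
monotone in `ε`. -/
noncomputable def Pr {ι : Type*} [Fintype ι] (f : ι → X → X) (φ : X → ℝ) (r : ℝ) : EReal :=
  ⨆ ε ∈ Set.Ioi (0 : ℝ), atTop.limsup fun n : ℕ =>
    (((n : ℝ)⁻¹ * Real.log (Qn f φ n ε r) : ℝ) : EReal)

/-- `P^s_r(f_0,…,f_{m-1},φ,ε)`, the fixed-`ε` separated-set `r`-pressure. -/
noncomputable def Pse {ι : Type*} [Fintype ι] (f : ι → X → X) (φ : X → ℝ) (ε r : ℝ) : EReal :=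
  atTop.limsup fun n : ℕ => (((n : ℝ)⁻¹ * Real.log (Qns f φ n ε r) : ℝ) : EReal)

/-- The topological `r`-pressure of the free semigroup action (separated sets). -/
noncomputable def Ps {ι : Type*} [Fintype ι] (f : ι → X → X) (φ : X → ℝ) (r : ℝ) : EReal :=
  ⨆ ε ∈ Set.Ioi (0 : ℝ), Pse f φ ε r

/-- Liminf variant of the separated-set topological `r`-pressure. -/
noncomputable def PsInf {ι : Type*} [Fintype ι] (f : ι → X → X) (φ : X → ℝ) (r : ℝ) : EReal :=
  ⨆ ε ∈ Set.Ioi (0 : ℝ), atTop.liminf fun n : ℕ =>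
    (((n : ℝ)⁻¹ * Real.log (Qns f φ n ε r) : ℝ) : EReal)

/-- `F` is a `(w, ε)`-spanning set for the Bowen metric `d_w` of the free semigroup action. -/
def span0 {ι : Type*} (f : ι → X → X) (w : List ι) (ε : ℝ) (F : Finset X) : Prop :=
  ∀ x : X, ∃ y ∈ F, ∀ i < w.length,
    dist (fw f (w.take i) x) (fw f (w.take i) y) ≤ ε

/-- `E` is a `(w, ε)`-separated set for the Bowen metric `d_w`. -/
def sep0 {ι : Type*} (f : ι → X → X) (w : List ι) (ε : ℝ) (E : Finset X) : Prop :=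
  ∀ x ∈ E, ∀ y ∈ E, x ≠ y → ∃ i < w.length,
    ε < dist (fw f (w.take i) x) (fw f (w.take i) y)

noncomputable def Qw0 {ι : Type*} (f : ι → X → X) (φ : X → ℝ) (w : List ι) (ε : ℝ) : ℝ :=
  sInf {s : ℝ | ∃ F : Finset X, span0 f w ε F ∧ s = ∑ x ∈ F, Real.exp (Sw f φ w x)}

noncomputable def Qws0 {ι : Type*} (f : ι → X → X) (φ : X → ℝ) (w : List ι) (ε : ℝ) : ℝ :=
  sSup {s : ℝ | ∃ E : Finset X, sep0 f w ε E ∧ s = ∑ x ∈ E, Real.exp (Sw f φ w x)}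

noncomputable def Qn0 {ι : Type*} [Fintype ι] (f : ι → X → X) (φ : X → ℝ) (n : ℕ) (ε : ℝ) : ℝ :=
  (1 / (Fintype.card ι : ℝ) ^ n) * ∑ σ : Fin n → ι, Qw0 f φ (List.ofFn σ) ε

noncomputable def Qns0 {ι : Type*} [Fintype ι] (f : ι → X → X) (φ : X → ℝ) (n : ℕ) (ε : ℝ) : ℝ :=
  (1 / (Fintype.card ι : ℝ) ^ n) * ∑ σ : Fin n → ι, Qws0 f φ (List.ofFn σ) ε

/-- The topological pressure of the free semigroup action. -/
noncomputable def P0 {ι : Type*} [Fintype ι] (f : ι → X → X) (φ : X → ℝ) : EReal :=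
  ⨆ ε ∈ Set.Ioi (0 : ℝ), atTop.limsup fun n : ℕ =>
    (((n : ℝ)⁻¹ * Real.log (Qn0 f φ n ε) : ℝ) : EReal)

/-- `r_w(ε,r)`: the smallest cardinality of a `(w,ε,r)`-spanning set. -/
noncomputable def rSpanCard {ι : Type*} (f : ι → X → X) (w : List ι) (ε r : ℝ) : ℕ :=
  sInf {k : ℕ | ∃ F : Finset X, rSpan f w ε r F ∧ F.card = k}

/-- The topological `r`-entropy of the free semigroup action. -/
noncomputable def hrEnt {ι : Type*} [Fintype ι] (f : ι → X → X) (r : ℝ) : EReal :=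
  ⨆ ε ∈ Set.Ioi (0 : ℝ), atTop.limsup fun n : ℕ =>
    (((n : ℝ)⁻¹ * Real.log ((1 / (Fintype.card ι : ℝ) ^ n) *
      ∑ σ : Fin n → ι, (rSpanCard f (List.ofFn σ) ε r : ℝ)) : ℝ) : EReal)

end FSG


section Aux

open Filter Topology

variable {X : Type*} {m : ℕ}

lemma fw_nil {ι : Type*} (f : ι → X → X) (x : X) : fw f [] x = x := rfl

lemma fw_cons {ι : Type*} (f : ι → X → X) (a : ι) (t : List ι) (x : X) :
    fw f (a :: t) x = fw f t (f a x) := rfl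

lemma fw_append {ι : Type*} (f : ι → X → X) (u v : List ι) (x : X) :
    fw f (u ++ v) x = fw f v (fw f u x) := List.foldl_append

variable [TopologicalSpace X]

lemma fw_symm_rev (f : Fin m → X ≃ₜ X) (u : List (Fin m)) (x : X) :
    fw (fun i => ⇑(f i).symm) u.reverse (fw (fun i => ⇑(f i)) u x) = x := by
  induction u generalizing x with
  | nil => rfl
  | cons a t ih =>
    rw [fw_cons, List.reverse_cons, fw_append, ih]
    exact (f a).symm_apply_apply x

lemma fw_rev_symm (f : Fin m → X ≃ₜ X) (v : List (Fin m)) (z : X) :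
    fw (fun i => ⇑(f i)) v (fw (fun i => ⇑(f i).symm) v.reverse z) = z := by
  have h := fw_symm_rev (fun i => (f i).symm) v.reverse z
  simp only [Homeomorph.symm_symm, List.reverse_reverse] at h
  exact h

lemma fw_injective (f : Fin m → X ≃ₜ X) (u : List (Fin m)) :
    Function.Injective (fw (fun i => ⇑(f i)) u) := by
  intro a b h
  have ha := fw_symm_rev f u a
  have hb := fw_symm_rev f u b
  rw [← ha, ← hb, h]

lemma fw_rev_take (f : Fin m → X ≃ₜ X) (w : List (Fin m)) {j : ℕ} (hj : j ≤ w.length) (x : X) :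
    fw (fun i => ⇑(f i).symm) (w.reverse.take j) (fw (fun i => ⇑(f i)) w x)
      = fw (fun i => ⇑(f i)) (w.take (w.length - j)) x := by
  have h2 : w.reverse.take j = (w.drop (w.length - j)).reverse := by
    rw [List.reverse_drop]
    congr 1
    omega
  conv_lhs => rw [h2, ← List.take_append_drop (w.length - j) w, fw_append,
    List.take_append_drop]
  rw [fw_symm_rev]

lemma Sw_rev (f : Fin m → X ≃ₜ X) (φ : X → ℝ) (w : List (Fin m)) (x : X) :
    Sw (fun i => ⇑(f i).symm) φ w.reverse (fw (fun i => ⇑(f i)) w x)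
      = Sw (fun i => ⇑(f i)) φ w x - φ x + φ (fw (fun i => ⇑(f i)) w x) := by
  unfold Sw
  have hlen : w.reverse.length = w.length := List.length_reverse
  set n := w.length with hn
  set G : ℕ → ℝ := fun i => φ (fw (fun i => ⇑(f i)) (w.take i) x) with hG
  have h1 : ∀ j ∈ Finset.range n,
      φ (fw (fun i => ⇑(f i).symm) (w.reverse.take j) (fw (fun i => ⇑(f i)) w x))
        = G ((n - 1 - j) + 1) := by
    intro j hj
    rw [Finset.mem_range] at hj
    rw [fw_rev_take f w (le_of_lt (hn ▸ hj)) x]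
    have : n - j = (n - 1 - j) + 1 := by omega
    rw [hG]
    simp only []
    rw [this]
  rw [hlen]
  rw [Finset.sum_congr rfl h1, Finset.sum_range_reflect (fun i => G (i + 1)) n]
  have h3 : ∑ i ∈ Finset.range n, G (i + 1)
      = ∑ i ∈ Finset.range n, G i - G 0 + G n := by
    have e1 := Finset.sum_range_succ' G n
    have e2 := Finset.sum_range_succ G n
    linarith
  rw [h3]
  have hG0 : G 0 = φ x := by simp [hG, fw_nil]
  have hGn : G n = φ (fw (fun i => ⇑(f i)) w x) := by
    simp [hG, hn, List.take_length]
  rw [hG0, hGn]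

lemma fw_continuous {ι : Type*} (f : ι → X → X)
    (hf : ∀ i, Continuous (f i)) (w : List ι) : Continuous (fw f w) := by
  induction w with
  | nil => exact continuous_id
  | cons a t ih =>
    have : fw f (a :: t) = fun x => fw f t (f a x) := rfl
    rw [this]
    exact ih.comp (hf a)

end Aux

section Aux2

open Filter Topology

variable {X : Type*} {m : ℕ} [MetricSpace X]

lemma exists_span0 [CompactSpace X] (f : Fin m → X ≃ₜ X) (w : List (Fin m)) {δ : ℝ}
    (hδ : 0 < δ) : ∃ F : Finset X, span0 (fun i => ⇑(f i)) w δ F := by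
  set g : ℕ → X → X := fun i => fw (fun i => ⇑(f i)) (w.take i) with hg
  have hgc : ∀ i : ℕ, Continuous (g i) := fun i =>
    fw_continuous _ (fun i => (f i).continuous) _
  set U : X → Set X := fun y =>
    ⋂ i : Fin w.length, (g i) ⁻¹' Metric.ball (g i y) δ with hU
  have hUopen : ∀ y, IsOpen (U y) := fun y =>
    isOpen_iInter_of_finite fun i => (hgc i).isOpen_preimage _ Metric.isOpen_ball
  have hcov : (Set.univ : Set X) ⊆ ⋃ y : X, U y := by
    intro x _
    refine Set.mem_iUnion.2 ⟨x, ?_⟩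
    exact Set.mem_iInter.2 fun i => by simp [Metric.mem_ball, hδ]
  obtain ⟨t, ht⟩ := isCompact_univ.elim_finite_subcover U hUopen hcov
  refine ⟨t, fun x => ?_⟩
  obtain ⟨y, hyt, hxy⟩ := Set.mem_iUnion₂.1 (ht (Set.mem_univ x))
  refine ⟨y, hyt, fun i hi => ?_⟩
  have := Set.mem_iInter.1 hxy ⟨i, hi⟩
  simp only [Set.mem_preimage, Metric.mem_ball] at this
  exact le_of_lt (by simpa [dist_comm] using this)

lemma Sw_abs_le {ι : Type*} (f : ι → X → X) {φ : X → ℝ} {C : ℝ}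
    (hC : ∀ x, |φ x| ≤ C) (w : List ι) (x : X) :
    |Sw f φ w x| ≤ w.length * C := by
  unfold Sw
  calc |∑ i ∈ Finset.range w.length, φ (fw f (w.take i) x)|
      ≤ ∑ i ∈ Finset.range w.length, |φ (fw f (w.take i) x)| :=
        Finset.abs_sum_le_sum_abs _ _
    _ ≤ ∑ _i ∈ Finset.range w.length, C := Finset.sum_le_sum fun i _ => hC _
    _ = w.length * C := by simp [mul_comm]

end Aux2


section Aux3

open Filter Topology

variable {X : Type*} {m : ℕ} [MetricSpace X] [CompactSpace X]

/-- Word-level comparison: the separated/spanning `Q` for the inverse action along the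
reversed word is controlled by the one for the forward action. -/
lemma Qw0_rev_le (f : Fin m → X ≃ₜ X) {φ : X → ℝ} {C : ℝ}
    (hC : ∀ x, |φ x| ≤ C) {ε δ : ℝ} (hδpos : 0 < δ) (hδε : δ ≤ ε)
    (hδ : ∀ (i : Fin m) (a b : X), dist a b ≤ δ → dist (f i a) (f i b) ≤ ε)
    (w : List (Fin m)) :
    Qw0 (fun i => ⇑(f i).symm) φ w.reverse ε
      ≤ Real.exp (2 * C) * Qw0 (fun i => ⇑(f i)) φ w δ := by
  classical
  set ff : Fin m → X → X := fun i => ⇑(f i) with hff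
  set gg : Fin m → X → X := fun i => ⇑(f i).symm with hgg
  set S : Set ℝ := {s : ℝ | ∃ F : Finset X, span0 ff w δ F ∧
      s = ∑ x ∈ F, Real.exp (Sw ff φ w x)} with hS
  set S' : Set ℝ := {s : ℝ | ∃ F : Finset X, span0 gg w.reverse ε F ∧
      s = ∑ x ∈ F, Real.exp (Sw gg φ w.reverse x)} with hS'
  have hSne : S.Nonempty := by
    obtain ⟨F, hF⟩ := exists_span0 f w hδpos
    exact ⟨_, F, hF, rfl⟩
  have hbdd : BddBelow S' := by
    refine ⟨0, fun s hs => ?_⟩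
    obtain ⟨F, _, rfl⟩ := hs
    exact Finset.sum_nonneg fun x _ => (Real.exp_pos _).le
  have key : ∀ s ∈ S, sInf S' ≤ Real.exp (2 * C) * s := by
    rintro s ⟨F, hF, rfl⟩
    set F' : Finset X := F.image (fw ff w) with hF'
    have hspan : span0 gg w.reverse ε F' := by
      intro z
      set x : X := fw gg w.reverse z with hx
      have hzx : fw ff w x = z := fw_rev_symm f w z
      obtain ⟨y, hyF, hy⟩ := hF x
      refine ⟨fw ff w y, Finset.mem_image_of_mem _ hyF, fun j hj => ?_⟩
      rw [List.length_reverse] at hj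
      rw [← hzx, fw_rev_take f w hj.le x, fw_rev_take f w hj.le y]
      rcases lt_or_ge (w.length - j) w.length with h | h
      · exact le_trans (hy _ h) hδε
      · -- j = 0 and w.length - j = w.length ≥ 1
        have hn : 1 ≤ w.length := by omega
        have heq : w.length - j = w.length := by omega
        have hidx : w.length - 1 < w.length := by omega
        have htake : w.take (w.length - j)
            = w.take (w.length - 1) ++ [w[w.length - 1]] := by
          rw [heq]
          have : w.length = (w.length - 1) + 1 := by omega
          conv_lhs => rw [this]
          rw [List.take_succ, List.getElem?_eq_getElem hidx]
          rfl
        rw [htake, fw_append, fw_append]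
        exact hδ _ _ _ (hy _ hidx)
    have hsum : ∑ z ∈ F', Real.exp (Sw gg φ w.reverse z)
        ≤ Real.exp (2 * C) * ∑ x ∈ F, Real.exp (Sw ff φ w x) := by
      rw [hF', Finset.sum_image (fun a _ b _ h => fw_injective f w h), Finset.mul_sum]
      refine Finset.sum_le_sum fun y _ => ?_
      rw [Sw_rev f φ w y, ← Real.exp_add]
      refine Real.exp_le_exp.2 ?_
      have h1 := abs_le.1 (hC y)
      have h2 := abs_le.1 (hC (fw ff w y))
      linarith
    exact le_trans (csInf_le hbdd ⟨F', hspan, rfl⟩) hsum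
  have hexp : (0 : ℝ) < Real.exp (2 * C) := Real.exp_pos _
  have h2 : sInf S' / Real.exp (2 * C) ≤ sInf S :=
    le_csInf hSne fun s hs => by
      rw [div_le_iff₀ hexp]
      linarith [key s hs, mul_comm (Real.exp (2 * C)) s]
  calc Qw0 gg φ w.reverse ε = sInf S' := rfl
    _ ≤ Real.exp (2 * C) * sInf S := by
        rw [← div_le_iff₀' hexp]
        exact h2
    _ = Real.exp (2 * C) * Qw0 ff φ w δ := rfl

/-- Positivity of `Qw0` on a nonempty compact space. -/
lemma Qw0_ge [Nonempty X] (f : Fin m → X ≃ₜ X) {φ : X → ℝ} {C : ℝ}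
    (hC : ∀ x, |φ x| ≤ C) {δ : ℝ} (hδ : 0 < δ) (w : List (Fin m)) :
    Real.exp (-(w.length * C)) ≤ Qw0 (fun i => ⇑(f i)) φ w δ := by
  classical
  refine le_csInf ?_ ?_
  · obtain ⟨F, hF⟩ := exists_span0 f w hδ
    exact ⟨_, F, hF, rfl⟩
  · rintro s ⟨F, hF, rfl⟩
    obtain ⟨y, hyF, -⟩ := hF (Classical.arbitrary X)
    calc Real.exp (-(w.length * C)) ≤ Real.exp (Sw (fun i => ⇑(f i)) φ w y) :=
          Real.exp_le_exp.2 (neg_le_of_abs_le (Sw_abs_le _ hC w y))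
      _ ≤ ∑ x ∈ F, Real.exp (Sw (fun i => ⇑(f i)) φ w x) :=
          Finset.single_le_sum (fun x _ => (Real.exp_pos _).le) hyF

end Aux3


section Aux4

open Filter Topology

variable {X : Type*} {m : ℕ} [MetricSpace X] [CompactSpace X]

lemma Qn0_rev_le (f : Fin m → X ≃ₜ X) {φ : X → ℝ} {C : ℝ}
    (hC : ∀ x, |φ x| ≤ C) {ε δ : ℝ} (hδpos : 0 < δ) (hδε : δ ≤ ε)
    (hδ : ∀ (i : Fin m) (a b : X), dist a b ≤ δ → dist (f i a) (f i b) ≤ ε)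
    (n : ℕ) :
    Qn0 (fun i => ⇑(f i).symm) φ n ε
      ≤ Real.exp (2 * C) * Qn0 (fun i => ⇑(f i)) φ n δ := by
  classical
  unfold Qn0
  have hre : ∀ σ : Fin n → Fin m,
      List.ofFn (σ ∘ Fin.rev) = (List.ofFn σ).reverse := by
    intro σ
    apply List.ext_getElem
    · simp
    · intro i h1 h2
      simp only [List.getElem_reverse, List.getElem_ofFn, List.length_ofFn,
        Function.comp_apply] at *
      congr 1
      ext
      simp only [Fin.rev]
      omega
  have hτ : Function.Bijective (fun σ : Fin n → Fin m => σ ∘ Fin.rev) :=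
    Function.Involutive.bijective fun σ => funext fun i => by
      simp [Function.comp, Fin.rev_rev]
  have h1 : ∑ σ : Fin n → Fin m, Qw0 (fun i => ⇑(f i).symm) φ (List.ofFn σ) ε
      = ∑ σ : Fin n → Fin m,
          Qw0 (fun i => ⇑(f i).symm) φ ((List.ofFn σ).reverse) ε :=
    (Fintype.sum_bijective _ hτ _ _ (fun σ => by rw [hre σ])).symm
  rw [h1]
  have h2 : ∑ σ : Fin n → Fin m, Qw0 (fun i => ⇑(f i).symm) φ ((List.ofFn σ).reverse) ε
      ≤ ∑ σ : Fin n → Fin m, Real.exp (2 * C) * Qw0 (fun i => ⇑(f i)) φ (List.ofFn σ) δ :=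
    Finset.sum_le_sum fun σ _ => Qw0_rev_le f hC hδpos hδε hδ (List.ofFn σ)
  have hpos : (0 : ℝ) ≤ 1 / (Fintype.card (Fin m) : ℝ) ^ n := by positivity
  calc (1 / (Fintype.card (Fin m) : ℝ) ^ n) *
        ∑ σ : Fin n → Fin m, Qw0 (fun i => ⇑(f i).symm) φ ((List.ofFn σ).reverse) ε
      ≤ (1 / (Fintype.card (Fin m) : ℝ) ^ n) *
        ∑ σ : Fin n → Fin m, Real.exp (2 * C) * Qw0 (fun i => ⇑(f i)) φ (List.ofFn σ) δ :=
        mul_le_mul_of_nonneg_left h2 hpos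
    _ = Real.exp (2 * C) * ((1 / (Fintype.card (Fin m) : ℝ) ^ n) *
        ∑ σ : Fin n → Fin m, Qw0 (fun i => ⇑(f i)) φ (List.ofFn σ) δ) := by
        rw [← Finset.mul_sum]
        ring

lemma Qn0_ge [Nonempty X] (f : Fin m → X ≃ₜ X) {φ : X → ℝ} {C : ℝ}
    (hC : ∀ x, |φ x| ≤ C) {δ : ℝ} (hδ : 0 < δ) (hm : 0 < m) (n : ℕ) :
    Real.exp (-(n * C)) ≤ Qn0 (fun i => ⇑(f i)) φ n δ := by
  classical
  have hmpos : (0 : ℝ) < ((Fintype.card (Fin m) : ℝ)) ^ n := by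
    simp only [Fintype.card_fin]
    positivity
  unfold Qn0
  have hsum : ((Fintype.card (Fin m) : ℝ)) ^ n * Real.exp (-(n * C))
      ≤ ∑ σ : Fin n → Fin m, Qw0 (fun i => ⇑(f i)) φ (List.ofFn σ) δ := by
    have hcard : ((Fintype.card (Fin n → Fin m) : ℝ)) = ((Fintype.card (Fin m) : ℝ)) ^ n := by
      rw [Fintype.card_fun]
      push_cast
      simp
    calc ((Fintype.card (Fin m) : ℝ)) ^ n * Real.exp (-(n * C))
        = ∑ _σ : Fin n → Fin m, Real.exp (-(n * C)) := by
          rw [Finset.sum_const, Finset.card_univ, nsmul_eq_mul, hcard]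
      _ ≤ ∑ σ : Fin n → Fin m, Qw0 (fun i => ⇑(f i)) φ (List.ofFn σ) δ := by
          refine Finset.sum_le_sum fun σ _ => ?_
          have h := Qw0_ge f hC hδ (List.ofFn σ)
          rwa [List.length_ofFn] at h
  calc Real.exp (-(n * C))
      = (1 / ((Fintype.card (Fin m) : ℝ)) ^ n) *
        (((Fintype.card (Fin m) : ℝ)) ^ n * Real.exp (-(n * C))) := by
        field_simp
    _ ≤ (1 / ((Fintype.card (Fin m) : ℝ)) ^ n) *
        ∑ σ : Fin n → Fin m, Qw0 (fun i => ⇑(f i)) φ (List.ofFn σ) δ :=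
        mul_le_mul_of_nonneg_left hsum (by positivity)

lemma exists_unif (f : Fin m → X ≃ₜ X) (hm : 0 < m) {ε : ℝ} (hε : 0 < ε) :
    ∃ δ, 0 < δ ∧ δ ≤ ε ∧ ∀ (i : Fin m) (a b : X), dist a b ≤ δ → dist (f i a) (f i b) ≤ ε := by
  have h : ∀ i : Fin m, ∃ δ, 0 < δ ∧ ∀ a b : X, dist a b ≤ δ → dist (f i a) (f i b) ≤ ε := by
    intro i
    have huc := CompactSpace.uniformContinuous_of_continuous (f i).continuous
    obtain ⟨δ₀, hδ₀, hd⟩ := Metric.uniformContinuous_iff.1 huc ε hε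
    exact ⟨δ₀ / 2, by linarith, fun a b hab => (hd (lt_of_le_of_lt hab (by linarith))).le⟩
  choose d hd hd2 using h
  have : Nonempty (Fin m) := ⟨⟨0, hm⟩⟩
  refine ⟨min ε (Finset.univ.inf' Finset.univ_nonempty d), lt_min hε ?_, min_le_left _ _,
    fun i a b hab => hd2 i a b (le_trans hab ?_)⟩
  · exact (Finset.lt_inf'_iff _).2 fun i _ => hd i
  · exact le_trans (min_le_right _ _) (Finset.inf'_le _ (Finset.mem_univ i))

lemma limsup_le_aux {u v : ℕ → ℝ} {K : ℝ}
    (h : ∀ᶠ n in Filter.atTop, u n ≤ K / n + v n) :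
    Filter.atTop.limsup (fun n => ((u n : ℝ) : EReal))
      ≤ Filter.atTop.limsup (fun n => ((v n : ℝ) : EReal)) := by
  set T := Filter.atTop.limsup (fun n => ((v n : ℝ) : EReal)) with hT
  refine le_of_forall_gt_imp_ge_of_dense fun b hb => ?_
  obtain ⟨b', hTb', hb'b⟩ := exists_between hb
  obtain ⟨b'', hb'b'', hb''b⟩ := exists_between hb'b
  lift b' to ℝ using ⟨ne_top_of_lt hb'b'', (bot_le.trans_lt hTb').ne'⟩
  lift b'' to ℝ using ⟨ne_top_of_lt hb''b, (bot_le.trans_lt (hTb'.trans hb'b'')).ne'⟩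
  have hcc : b' < b'' := by exact_mod_cast hb'b''
  have hv : ∀ᶠ n in Filter.atTop, ((v n : ℝ) : EReal) < (b' : EReal) :=
    eventually_lt_of_limsup_lt hTb'
  have hn : ∀ᶠ n : ℕ in Filter.atTop, K / (n : ℝ) ≤ b'' - b' :=
    (tendsto_const_div_atTop_nhds_zero_nat K).eventually (eventually_le_nhds (by linarith))
  have hev : ∀ᶠ n in Filter.atTop, (fun n => ((u n : ℝ) : EReal)) n ≤ (b'' : EReal) := by
    filter_upwards [h, hv, hn] with n h1 h2 h3
    have h2' : v n < b' := by exact_mod_cast h2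
    have : u n ≤ b'' := by linarith
    exact_mod_cast this
  exact le_trans (limsup_le_of_le (by isBoundedDefault) hev) hb''b.le

lemma P0_symm_le (f : Fin m → X ≃ₜ X) (φ : X → ℝ) (hφ : Continuous φ) :
    P0 (fun i => ⇑(f i).symm) φ ≤ P0 (fun i => ⇑(f i)) φ := by
  classical
  rcases Nat.eq_zero_or_pos m with hm | hm
  · subst hm
    have hq : ∀ (g : Fin 0 → X → X) (ε : ℝ) (n : ℕ), 0 < n → Qn0 g φ n ε = 0 := by
      intro g ε n hn
      unfold Qn0
      simp [Fintype.card_fin, zero_pow hn.ne']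
    refine le_of_eq ?_
    unfold P0
    refine iSup_congr fun ε => iSup_congr fun _ => limsup_congr ?_
    filter_upwards [Filter.eventually_ge_atTop 1] with n hn
    rw [hq _ ε n hn, hq _ ε n hn]
  rcases isEmpty_or_nonempty X with hX | hX
  · have hq : ∀ (g h : Fin m → X → X) (w : List (Fin m)) (ε : ℝ),
        Qw0 g φ w ε = Qw0 h φ w ε := by
      intro g h w ε
      have hone : ∀ (g : Fin m → X → X),
          {s : ℝ | ∃ F : Finset X, span0 g w ε F ∧
            s = ∑ x ∈ F, Real.exp (Sw g φ w x)} = {(0 : ℝ)} := by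
        intro g
        ext s
        simp only [Set.mem_setOf_eq, Set.mem_singleton_iff]
        constructor
        · rintro ⟨F, -, rfl⟩
          have : F = ∅ := Finset.eq_empty_of_isEmpty F
          simp [this]
        · rintro rfl
          exact ⟨∅, fun x => (hX.false x).elim, by simp⟩
      unfold Qw0
      rw [hone g, hone h]
    refine le_of_eq ?_
    unfold P0
    refine iSup_congr fun ε => iSup_congr fun _ => limsup_congr ?_
    refine Filter.Eventually.of_forall fun n => ?_
    have hsum : ∑ σ : Fin n → Fin m, Qw0 (fun i => ⇑(f i).symm) φ (List.ofFn σ) ε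
        = ∑ σ : Fin n → Fin m, Qw0 (fun i => ⇑(f i)) φ (List.ofFn σ) ε :=
      Finset.sum_congr rfl fun σ _ => hq _ _ (List.ofFn σ) ε
    unfold Qn0
    rw [hsum]
  · obtain ⟨z, -, hz⟩ := isCompact_univ.exists_isMaxOn Set.univ_nonempty
      ((continuous_abs.comp hφ).continuousOn)
    set C := |φ z| with hCdef
    have hC : ∀ x, |φ x| ≤ C := fun x => hz (Set.mem_univ x)
    have hC0 : (0 : ℝ) ≤ C := abs_nonneg _
    conv_lhs => rw [P0]
    refine iSup₂_le fun ε hε => ?_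
    rw [Set.mem_Ioi] at hε
    obtain ⟨δ, hδpos, hδε, hδ⟩ := exists_unif f hm hε
    have posg : ∀ n, 0 < Qn0 (fun i => ⇑(f i).symm) φ n ε := by
      intro n
      have h := Qn0_ge (fun i => (f i).symm) hC hε hm n
      exact lt_of_lt_of_le (Real.exp_pos _) h
    have posf : ∀ n, 0 < Qn0 (fun i => ⇑(f i)) φ n δ := fun n =>
      lt_of_lt_of_le (Real.exp_pos _) (Qn0_ge f hC hδpos hm n)
    have hlog : ∀ᶠ n : ℕ in Filter.atTop,
        (n : ℝ)⁻¹ * Real.log (Qn0 (fun i => ⇑(f i).symm) φ n ε)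
          ≤ (2 * C) / n + (n : ℝ)⁻¹ * Real.log (Qn0 (fun i => ⇑(f i)) φ n δ) := by
      refine Filter.Eventually.of_forall fun n => ?_
      have hlg : Real.log (Qn0 (fun i => ⇑(f i).symm) φ n ε)
          ≤ 2 * C + Real.log (Qn0 (fun i => ⇑(f i)) φ n δ) := by
        calc Real.log (Qn0 (fun i => ⇑(f i).symm) φ n ε)
            ≤ Real.log (Real.exp (2 * C) * Qn0 (fun i => ⇑(f i)) φ n δ) :=
              Real.log_le_log (posg n) (Qn0_rev_le f hC hδpos hδε hδ n)
          _ = 2 * C + Real.log (Qn0 (fun i => ⇑(f i)) φ n δ) := by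
              rw [Real.log_mul (Real.exp_ne_zero _) (posf n).ne', Real.log_exp]
      have hninv : (0 : ℝ) ≤ (n : ℝ)⁻¹ := by positivity
      calc (n : ℝ)⁻¹ * Real.log (Qn0 (fun i => ⇑(f i).symm) φ n ε)
          ≤ (n : ℝ)⁻¹ * (2 * C + Real.log (Qn0 (fun i => ⇑(f i)) φ n δ)) :=
            mul_le_mul_of_nonneg_left hlg hninv
        _ = (2 * C) / n + (n : ℝ)⁻¹ * Real.log (Qn0 (fun i => ⇑(f i)) φ n δ) := by
            rw [mul_add]
            ring
    refine le_trans (limsup_le_aux hlog) ?_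
    rw [P0]
    exact le_iSup₂_of_le δ (Set.mem_Ioi.2 hδpos) le_rfl

end Aux4


theorem pressure_of_inverses
    {X : Type*} [MetricSpace X] [CompactSpace X] {m : ℕ}
    (f : Fin m → X ≃ₜ X) (φ : X → ℝ) (hφ : Continuous φ) :
    P0 (fun i => ⇑(f i)) φ = P0 (fun i => ⇑(f i).symm) φ := by
  refine le_antisymm ?_ (P0_symm_le f φ hφ)
  have h := P0_symm_le (fun i => (f i).symm) φ hφ
  simpa using h
end

section
/- Let f_0,...,f_{m-1} be continuous self-maps of a compact metric space, φ continuous, 0<r<1, c∈ℝ. If c ≥ 1 then P^s_r(f_0,...,f_{m-1},cφ) ≤ c·P^s_r(f_0,...,f_{m-1},φ) + (c−1)log m; if c ≤ 1 then P^s_r(f_0,...,f_{m-1},cφ) ≥ c·P^s_r(f_0,...,f_{m-1},φ) + (c−1)log m. -/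
open Filter Topology

section Aux3
variable {X : Type*} [MetricSpace X] {m : ℕ}

lemma rSep_empty (f : Fin m → X → X) (w : List (Fin m)) (ε r : ℝ) :
    rSep f w ε r (∅ : Finset X) := by
  intro x hx
  simp at hx

lemma rSep_singleton (f : Fin m → X → X) (w : List (Fin m)) (ε r : ℝ) (x₀ : X) :
    rSep f w ε r ({x₀} : Finset X) := by
  intro x hx y hy hxy
  rw [Finset.mem_singleton] at hx hy
  exact absurd (hx.trans hy.symm) hxy

lemma abs_Sw_le (f : Fin m → X → X) {φ : X → ℝ} {M : ℝ} (hM : ∀ x, |φ x| ≤ M)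
    (w : List (Fin m)) (x : X) : |Sw f φ w x| ≤ w.length * M := by
  calc |Sw f φ w x| ≤ ∑ i ∈ Finset.range w.length, |φ (fw f (w.take i) x)| :=
        Finset.abs_sum_le_sum_abs _ _
    _ ≤ ∑ _i ∈ Finset.range w.length, M := Finset.sum_le_sum fun i _ => hM _
    _ = w.length * M := by rw [Finset.sum_const, Finset.card_range, nsmul_eq_mul]

lemma exists_card_bound [CompactSpace X] [Nonempty X]
    (f : Fin m → X → X) {r ε : ℝ} (hr0 : 0 < r) (hε : 0 < ε) :
    ∃ K : ℕ, 0 < K ∧ ∀ (w : List (Fin m)) (E : Finset X),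
      rSep f w ε r E → E.card ≤ K ^ w.length := by
  classical
  obtain ⟨t, -, htfin, htcov⟩ := finite_cover_balls_of_compact (isCompact_univ : IsCompact (Set.univ : Set X)) (half_pos hε)
  have hcov : ∀ z : X, ∃ y ∈ htfin.toFinset, z ∈ Metric.ball y (ε / 2) := by
    intro z
    have := htcov (Set.mem_univ z)
    simp only [Set.mem_iUnion, exists_prop] at this
    obtain ⟨y, hy, hz⟩ := this
    exact ⟨y, htfin.mem_toFinset.2 hy, hz⟩
  set t' : Finset X := htfin.toFinset with ht'
  choose center hcmem hcball using hcov
  have ht'ne : t'.Nonempty := ⟨center (Classical.arbitrary X), hcmem _⟩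
  refine ⟨t'.card, Finset.card_pos.2 ht'ne, ?_⟩
  intro w E hE
  set n := w.length with hn
  have hinj : Set.InjOn
      (fun x : X => fun i : Fin n => (⟨center (fw f (w.take i) x), hcmem _⟩ : {y // y ∈ t'}))
      (E : Set X) := by
    intro x hx y hy hxy
    by_contra hne
    have hsep := hE x hx y hy hne
    have hfilter : ((Finset.range n).filter
        (fun i => ε ≤ dist (fw f (w.take i) x) (fw f (w.take i) y))).Nonempty := by
      rw [Finset.nonempty_iff_ne_empty]
      intro hemp
      rw [← hn] at hsep
      rw [hemp] at hsep
      simp only [Finset.card_empty, Nat.cast_zero] at hsep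
      exact absurd hsep (not_lt.2 (mul_nonneg hr0.le (Nat.cast_nonneg n)))
    obtain ⟨i, hi⟩ := hfilter
    rw [Finset.mem_filter, Finset.mem_range] at hi
    obtain ⟨hin, hdist⟩ := hi
    have := congrFun hxy ⟨i, hin⟩
    have hcenter : center (fw f (w.take i) x) = center (fw f (w.take i) y) :=
      congrArg Subtype.val this
    have h1 := hcball (fw f (w.take i) x)
    have h2 := hcball (fw f (w.take i) y)
    rw [hcenter] at h1
    rw [Metric.mem_ball] at h1 h2
    have : dist (fw f (w.take i) x) (fw f (w.take i) y) < ε := by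
      calc dist (fw f (w.take i) x) (fw f (w.take i) y) ≤
          dist (fw f (w.take i) x) (center (fw f (w.take i) y)) +
          dist (fw f (w.take i) y) (center (fw f (w.take i) y)) := dist_triangle_right _ _ _
        _ < ε / 2 + ε / 2 := add_lt_add h1 h2
        _ = ε := add_halves ε
    exact absurd hdist (not_le.2 this)
  have hcard := Finset.card_le_card_of_injOn
      (fun x : X => fun i : Fin n => (⟨center (fw f (w.take i) x), hcmem _⟩ : {y // y ∈ t'}))
      (fun a _ => Finset.mem_univ _) hinj
  calc E.card ≤ (Finset.univ : Finset (Fin n → {y // y ∈ t'})).card := hcard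
    _ = t'.card ^ n := by
        rw [Finset.card_univ, Fintype.card_fun, Fintype.card_coe, Fintype.card_fin]

end Aux3
lemma rpow_two_sup {x y c : ℝ} (hx : 0 ≤ x) (hy : 0 ≤ y) (hc : 1 ≤ c) :
    x ^ c + y ^ c ≤ (x + y) ^ c := by
  have h := NNReal.add_rpow_le_rpow_add x.toNNReal y.toNNReal hc
  have h2 := NNReal.coe_le_coe.2 h
  rwa [NNReal.coe_add, NNReal.coe_rpow, NNReal.coe_rpow, NNReal.coe_rpow,
    ← Real.toNNReal_add hx hy, Real.coe_toNNReal _ hx, Real.coe_toNNReal _ hy,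
    Real.coe_toNNReal _ (by positivity)] at h2

lemma rpow_two_sub {x y c : ℝ} (hx : 0 ≤ x) (hy : 0 ≤ y) (h0 : 0 ≤ c) (hc : c ≤ 1) :
    (x + y) ^ c ≤ x ^ c + y ^ c := by
  have h := NNReal.rpow_add_le_add_rpow x.toNNReal y.toNNReal h0 hc
  have h2 := NNReal.coe_le_coe.2 h
  rwa [NNReal.coe_add, NNReal.coe_rpow, NNReal.coe_rpow, NNReal.coe_rpow,
    ← Real.toNNReal_add hx hy, Real.coe_toNNReal _ hx, Real.coe_toNNReal _ hy,
    Real.coe_toNNReal _ (by positivity)] at h2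

lemma sum_rpow_le_rpow_sum {α : Type*} (s : Finset α) (a : α → ℝ)
    (ha : ∀ i ∈ s, 0 ≤ a i) {c : ℝ} (hc : 1 ≤ c) :
    ∑ i ∈ s, a i ^ c ≤ (∑ i ∈ s, a i) ^ c := by
  classical
  induction s using Finset.induction with
  | empty => simp [Real.zero_rpow (by positivity : c ≠ 0)]
  | @insert j s hj ih =>
    have haj : 0 ≤ a j := ha j (Finset.mem_insert_self _ _)
    have has : ∀ i ∈ s, 0 ≤ a i := fun i hi => ha i (Finset.mem_insert_of_mem hi)
    rw [Finset.sum_insert hj, Finset.sum_insert hj]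
    calc a j ^ c + ∑ i ∈ s, a i ^ c ≤ a j ^ c + (∑ i ∈ s, a i) ^ c := by
          linarith [ih has]
      _ ≤ (a j + ∑ i ∈ s, a i) ^ c :=
          rpow_two_sup haj (Finset.sum_nonneg has) hc

lemma rpow_sum_le_sum_rpow {α : Type*} (s : Finset α) (hs : s.Nonempty) (a : α → ℝ)
    (ha : ∀ i ∈ s, 0 < a i) {c : ℝ} (hc : c ≤ 1) :
    (∑ i ∈ s, a i) ^ c ≤ ∑ i ∈ s, a i ^ c := by
  classical
  rcases le_or_gt c 0 with h0 | h0
  · obtain ⟨i0, hi0⟩ := hs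
    have h1 : (∑ i ∈ s, a i) ^ c ≤ a i0 ^ c :=
      Real.rpow_le_rpow_of_nonpos (ha i0 hi0) (Finset.single_le_sum (fun i hi => (ha i hi).le) hi0) h0
    refine h1.trans (Finset.single_le_sum (f := fun i => a i ^ c) (fun i hi => ?_) hi0)
    exact Real.rpow_nonneg (ha i hi).le c
  · -- 0 < c ≤ 1 : induction
    induction s using Finset.induction with
    | empty => simp at hs
    | @insert j s hj ih =>
      rcases s.eq_empty_or_nonempty with rfl | hsne
      · simp
      · have haj := ha j (Finset.mem_insert_self _ _)
        have has : ∀ i ∈ s, 0 < a i := fun i hi => ha i (Finset.mem_insert_of_mem hi)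
        rw [Finset.sum_insert hj, Finset.sum_insert hj]
        calc (a j + ∑ i ∈ s, a i) ^ c ≤ a j ^ c + (∑ i ∈ s, a i) ^ c :=
              rpow_two_sub haj.le (Finset.sum_nonneg fun i hi => (has i hi).le) h0.le hc
          _ ≤ a j ^ c + ∑ i ∈ s, a i ^ c := by linarith [ih hsne has]
lemma ereal_le_coe_of_forall_pos {A : EReal} {x : ℝ} (h : ∀ δ : ℝ, 0 < δ → A ≤ ((x + δ : ℝ) : EReal)) :
    A ≤ (x : EReal) := by
  by_contra hlt
  rw [not_le] at hlt
  obtain ⟨y, hxy, hyA⟩ := EReal.lt_iff_exists_real_btwn.1 hlt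
  have hy : x < y := EReal.coe_lt_coe_iff.1 hxy
  have := h (y - x) (by linarith)
  rw [add_sub_cancel] at this
  exact (this.trans_lt hyA).false

lemma ereal_coe_le_of_forall_pos {A : EReal} {x : ℝ} (h : ∀ δ : ℝ, 0 < δ → ((x - δ : ℝ) : EReal) ≤ A) :
    (x : EReal) ≤ A := by
  by_contra hlt
  rw [not_le] at hlt
  obtain ⟨y, hAy, hyx⟩ := EReal.lt_iff_exists_real_btwn.1 hlt
  have hy : y < x := EReal.coe_lt_coe_iff.1 hyx
  have := h (x - y) (by linarith)
  rw [sub_sub_cancel] at this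
  exact (hAy.trans_le this).false

lemma limsup_le_affine {u v : ℕ → ℝ} {c d CM Cm : ℝ} (hc : 0 ≤ c)
    (h : ∀ᶠ n in atTop, u n ≤ c * v n + d)
    (hlo : ∀ᶠ n in atTop, Cm ≤ v n) (hhi : ∀ᶠ n in atTop, v n ≤ CM) :
    atTop.limsup (fun n => ((u n : ℝ) : EReal)) ≤
      (c : EReal) * atTop.limsup (fun n => ((v n : ℝ) : EReal)) + ((d : ℝ) : EReal) := by
  set L := atTop.limsup (fun n => ((v n : ℝ) : EReal)) with hLdef
  have hLtop : L ≤ (CM : EReal) :=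
    limsup_le_of_le (by isBoundedDefault) (hhi.mono fun n hn => EReal.coe_le_coe_iff.2 hn)
  have hLbot : (Cm : EReal) ≤ L :=
    le_limsup_of_frequently_le ((hlo.mono fun n hn => EReal.coe_le_coe_iff.2 hn).frequently)
      (by isBoundedDefault)
  have hne_top : L ≠ ⊤ := fun htop => by
    rw [htop] at hLtop; exact absurd hLtop (EReal.coe_lt_top CM).not_ge
  have hne_bot : L ≠ ⊥ := fun hbot => by
    rw [hbot] at hLbot; exact (EReal.coe_ne_bot Cm) (le_bot_iff.1 hLbot)
  set l := L.toReal with hl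
  have hLl : L = (l : EReal) := (EReal.coe_toReal hne_top hne_bot).symm
  rw [hLl, ← EReal.coe_mul, ← EReal.coe_add]
  apply ereal_le_coe_of_forall_pos
  intro δ hδ
  rcases eq_or_lt_of_le hc with hc0 | hcpos
  · refine limsup_le_of_le (by isBoundedDefault) ?_
    filter_upwards [h] with n hn
    refine EReal.coe_le_coe_iff.2 ?_
    have hud : u n ≤ d := by rw [← hc0] at hn; linarith
    rw [← hc0]; linarith
  · have hlt : L < ((l + δ / c : ℝ) : EReal) := by
      rw [hLl]; exact EReal.coe_lt_coe_iff.2 (by have := div_pos hδ hcpos; linarith)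
    have hv : ∀ᶠ n in atTop, ((v n : ℝ) : EReal) < ((l + δ / c : ℝ) : EReal) :=
      eventually_lt_of_limsup_lt hlt
    refine limsup_le_of_le (by isBoundedDefault) ?_
    filter_upwards [h, hv] with n hn1 hn2
    refine EReal.coe_le_coe_iff.2 ?_
    have hv' : v n < l + δ / c := EReal.coe_lt_coe_iff.1 hn2
    have : c * v n ≤ c * (l + δ / c) := by nlinarith
    have hcd : c * (l + δ / c) = c * l + δ := by
      rw [mul_add, mul_div_cancel₀ _ (ne_of_gt hcpos)]
    linarith [hn1, this, hcd.le]

lemma affine_le_limsup {u v : ℕ → ℝ} {c d CM Cm : ℝ}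
    (h : ∀ᶠ n in atTop, c * v n + d ≤ u n)
    (hlo : ∀ᶠ n in atTop, Cm ≤ v n) (hhi : ∀ᶠ n in atTop, v n ≤ CM) :
    (c : EReal) * atTop.limsup (fun n => ((v n : ℝ) : EReal)) + ((d : ℝ) : EReal) ≤
      atTop.limsup (fun n => ((u n : ℝ) : EReal)) := by
  set L := atTop.limsup (fun n => ((v n : ℝ) : EReal)) with hLdef
  have hLtop : L ≤ (CM : EReal) :=
    limsup_le_of_le (by isBoundedDefault) (hhi.mono fun n hn => EReal.coe_le_coe_iff.2 hn)
  have hLbot : (Cm : EReal) ≤ L :=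
    le_limsup_of_frequently_le ((hlo.mono fun n hn => EReal.coe_le_coe_iff.2 hn).frequently)
      (by isBoundedDefault)
  have hne_top : L ≠ ⊤ := fun htop => by
    rw [htop] at hLtop; exact absurd hLtop (EReal.coe_lt_top CM).not_ge
  have hne_bot : L ≠ ⊥ := fun hbot => by
    rw [hbot] at hLbot; exact (EReal.coe_ne_bot Cm) (le_bot_iff.1 hLbot)
  set l := L.toReal with hl
  have hLl : L = (l : EReal) := (EReal.coe_toReal hne_top hne_bot).symm
  rw [hLl, ← EReal.coe_mul, ← EReal.coe_add]
  apply ereal_coe_le_of_forall_pos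
  intro δ hδ
  rcases eq_or_ne c 0 with rfl | hc0
  · refine le_trans (EReal.coe_le_coe_iff.2 (by linarith : (0 * l + d - δ : ℝ) ≤ d)) ?_
    exact le_limsup_of_frequently_le
      ((h.mono fun n hn => EReal.coe_le_coe_iff.2 (by linarith [hn] : d ≤ u n)).frequently)
      (by isBoundedDefault)
  · set η := δ / |c| with hη
    have hηpos : 0 < η := div_pos hδ (abs_pos.2 hc0)
    have h1 : ∀ᶠ n in atTop, ((v n : ℝ) : EReal) < ((l + η : ℝ) : EReal) :=
      eventually_lt_of_limsup_lt (by rw [← hLdef, hLl]; exact EReal.coe_lt_coe_iff.2 (by linarith))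
    have h2 : ∃ᶠ n in atTop, ((l - η : ℝ) : EReal) < ((v n : ℝ) : EReal) :=
      frequently_lt_of_lt_limsup (by isBoundedDefault)
        (by rw [← hLdef, hLl]; exact EReal.coe_lt_coe_iff.2 (by linarith))
    have h3 : ∃ᶠ n in atTop, ((c * l + d - δ : ℝ) : EReal) ≤ ((u n : ℝ) : EReal) := by
      refine (h2.and_eventually (h1.and h)).mono ?_
      rintro n ⟨hn1, hn2, hn3⟩
      refine EReal.coe_le_coe_iff.2 ?_
      have hv1 : l - η < v n := EReal.coe_lt_coe_iff.1 hn1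
      have hv2 : v n < l + η := EReal.coe_lt_coe_iff.1 hn2
      have key : c * l - δ ≤ c * v n := by
        rcases lt_or_gt_of_ne hc0 with hneg | hpos
        · have habs : |c| = -c := abs_of_neg hneg
          have hprod : 0 < (-c) * (l + η - v n) := mul_pos (neg_pos.2 hneg) (by linarith)
          have hηc : η * (-c) = δ := by
            rw [hη, habs]; exact div_mul_cancel₀ δ (neg_ne_zero.2 hc0)
          nlinarith [hprod, hηc]
        · have habs : |c| = c := abs_of_pos hpos
          have hprod : 0 < c * (v n - (l - η)) := mul_pos hpos (by linarith)
          have hηc : η * c = δ := by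
            rw [hη, habs]; exact div_mul_cancel₀ δ hc0
          nlinarith [hprod, hηc]
      linarith
    exact le_limsup_of_frequently_le h3 (by isBoundedDefault)

section Aux4
variable {X : Type*} [MetricSpace X] {m : ℕ}
variable (f : Fin m → X → X) {r ε : ℝ}

lemma qws_set_nonempty (ψ : X → ℝ) (w : List (Fin m)) :
    Set.Nonempty {s : ℝ | ∃ E : Finset X, rSep f w ε r E ∧ s = ∑ x ∈ E, Real.exp (Sw f ψ w x)} :=
  ⟨0, ∅, rSep_empty f w ε r, (Finset.sum_empty).symm⟩

lemma qws_set_le {ψ : X → ℝ} {M : ℝ} {K : ℕ} (hM : ∀ x, |ψ x| ≤ M)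
    (hK : ∀ (w : List (Fin m)) (E : Finset X), rSep f w ε r E → E.card ≤ K ^ w.length)
    (w : List (Fin m)) :
    ∀ s ∈ {s : ℝ | ∃ E : Finset X, rSep f w ε r E ∧ s = ∑ x ∈ E, Real.exp (Sw f ψ w x)},
      s ≤ (K : ℝ) ^ w.length * Real.exp (w.length * M) := by
  rintro s ⟨E, hE, rfl⟩
  calc ∑ x ∈ E, Real.exp (Sw f ψ w x) ≤ ∑ _x ∈ E, Real.exp (w.length * M) :=
        Finset.sum_le_sum fun x _ => Real.exp_le_exp.2 (abs_le.1 (abs_Sw_le f hM w x)).2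
    _ = E.card * Real.exp (w.length * M) := by rw [Finset.sum_const, nsmul_eq_mul]
    _ ≤ (K : ℝ) ^ w.length * Real.exp (w.length * M) := by
        refine mul_le_mul_of_nonneg_right ?_ (Real.exp_pos _).le
        exact_mod_cast hK w E hE

lemma qws_bddAbove {ψ : X → ℝ} {M : ℝ} {K : ℕ} (hM : ∀ x, |ψ x| ≤ M)
    (hK : ∀ (w : List (Fin m)) (E : Finset X), rSep f w ε r E → E.card ≤ K ^ w.length)
    (w : List (Fin m)) :
    BddAbove {s : ℝ | ∃ E : Finset X, rSep f w ε r E ∧ s = ∑ x ∈ E, Real.exp (Sw f ψ w x)} :=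
  ⟨(K : ℝ) ^ w.length * Real.exp (w.length * M), qws_set_le f hM hK w⟩

lemma exp_le_qws {ψ : X → ℝ} {M : ℝ} {K : ℕ} (hM : ∀ x, |ψ x| ≤ M)
    (hK : ∀ (w : List (Fin m)) (E : Finset X), rSep f w ε r E → E.card ≤ K ^ w.length)
    (w : List (Fin m)) (x₀ : X) : Real.exp (Sw f ψ w x₀) ≤ Qws f ψ w ε r :=
  le_csSup (qws_bddAbove f hM hK w)
    ⟨{x₀}, rSep_singleton f w ε r x₀, (Finset.sum_singleton _ _).symm⟩

lemma qws_pos [Nonempty X] {ψ : X → ℝ} {M : ℝ} {K : ℕ} (hM : ∀ x, |ψ x| ≤ M)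
    (hK : ∀ (w : List (Fin m)) (E : Finset X), rSep f w ε r E → E.card ≤ K ^ w.length)
    (w : List (Fin m)) : 0 < Qws f ψ w ε r :=
  (Real.exp_pos _).trans_le (exp_le_qws f hM hK w (Classical.arbitrary X))

lemma exp_neg_le_qws [Nonempty X] {ψ : X → ℝ} {M : ℝ} {K : ℕ} (hM : ∀ x, |ψ x| ≤ M)
    (hK : ∀ (w : List (Fin m)) (E : Finset X), rSep f w ε r E → E.card ≤ K ^ w.length)
    (w : List (Fin m)) : Real.exp (-(w.length * M)) ≤ Qws f ψ w ε r := by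
  have x₀ := Classical.arbitrary X
  refine le_trans (Real.exp_le_exp.2 (abs_le.1 (abs_Sw_le f hM w x₀)).1) (exp_le_qws f hM hK w x₀)

lemma qws_le {ψ : X → ℝ} {M : ℝ} {K : ℕ} (hM : ∀ x, |ψ x| ≤ M)
    (hK : ∀ (w : List (Fin m)) (E : Finset X), rSep f w ε r E → E.card ≤ K ^ w.length)
    (w : List (Fin m)) : Qws f ψ w ε r ≤ (K : ℝ) ^ w.length * Real.exp (w.length * M) :=
  csSup_le (qws_set_nonempty f ψ w) (qws_set_le f hM hK w)

lemma Sw_smul (c : ℝ) (ψ : X → ℝ) (w : List (Fin m)) (x : X) :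
    Sw f (fun y => c * ψ y) w x = c * Sw f ψ w x := by
  rw [Sw, Sw, Finset.mul_sum]

lemma qws_smul_le {ψ : X → ℝ} {M : ℝ} {K : ℕ} (hM : ∀ x, |ψ x| ≤ M)
    (hK : ∀ (w : List (Fin m)) (E : Finset X), rSep f w ε r E → E.card ≤ K ^ w.length)
    {c : ℝ} (hc : 1 ≤ c) (w : List (Fin m)) :
    Qws f (fun y => c * ψ y) w ε r ≤ (Qws f ψ w ε r) ^ c := by
  apply csSup_le (qws_set_nonempty f _ w)
  rintro s ⟨E, hE, rfl⟩
  have he : ∀ x ∈ E, Real.exp (Sw f (fun y => c * ψ y) w x) = Real.exp (Sw f ψ w x) ^ c :=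
    fun x _ => by rw [Sw_smul, mul_comm, Real.exp_mul]
  rw [Finset.sum_congr rfl he]
  calc ∑ x ∈ E, Real.exp (Sw f ψ w x) ^ c ≤ (∑ x ∈ E, Real.exp (Sw f ψ w x)) ^ c :=
        sum_rpow_le_rpow_sum _ _ (fun i _ => (Real.exp_pos _).le) hc
    _ ≤ (Qws f ψ w ε r) ^ c :=
        Real.rpow_le_rpow (Finset.sum_nonneg fun i _ => (Real.exp_pos _).le)
          (le_csSup (qws_bddAbove f hM hK w) ⟨E, hE, rfl⟩) (by linarith)

lemma qws_smul_ge [Nonempty X] {ψ : X → ℝ} {M : ℝ} {K : ℕ} (hM : ∀ x, |ψ x| ≤ M)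
    (hK : ∀ (w : List (Fin m)) (E : Finset X), rSep f w ε r E → E.card ≤ K ^ w.length)
    {c : ℝ} (hc : c ≤ 1) (w : List (Fin m)) :
    (Qws f ψ w ε r) ^ c ≤ Qws f (fun y => c * ψ y) w ε r := by
  have hM' : ∀ x, |c * ψ x| ≤ |c| * M := fun x => by
    rw [abs_mul]; exact mul_le_mul_of_nonneg_left (hM x) (abs_nonneg c)
  have hbddc := qws_bddAbove f hM' hK w
  have hA : 0 < Qws f ψ w ε r := qws_pos f hM hK w
  have key : ∀ s ∈ {s : ℝ | ∃ E : Finset X, rSep f w ε r E ∧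
        s = ∑ x ∈ E, Real.exp (Sw f ψ w x)},
      0 < s → s ^ c ≤ Qws f (fun y => c * ψ y) w ε r := by
    rintro s ⟨E, hE, rfl⟩ hs
    have hEne : E.Nonempty := by
      rw [Finset.nonempty_iff_ne_empty]; rintro rfl; simp at hs
    have heq : ∀ x ∈ E, Real.exp (Sw f ψ w x) ^ c
        = Real.exp (Sw f (fun y => c * ψ y) w x) :=
      fun x _ => by rw [Sw_smul, mul_comm, Real.exp_mul]
    calc (∑ x ∈ E, Real.exp (Sw f ψ w x)) ^ c ≤ ∑ x ∈ E, Real.exp (Sw f ψ w x) ^ c :=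
          rpow_sum_le_sum_rpow _ hEne _ (fun i _ => Real.exp_pos _) hc
      _ = ∑ x ∈ E, Real.exp (Sw f (fun y => c * ψ y) w x) := Finset.sum_congr rfl heq
      _ ≤ Qws f (fun y => c * ψ y) w ε r := le_csSup hbddc ⟨E, hE, rfl⟩
  rcases le_or_gt 0 c with h0 | h0
  · have hIoo : ∀ t ∈ Set.Ioo (0 : ℝ) (Qws f ψ w ε r),
        t ^ c ≤ Qws f (fun y => c * ψ y) w ε r := by
      intro t ht
      obtain ⟨s, hsmem, hst⟩ := exists_lt_of_lt_csSup (qws_set_nonempty f ψ w) ht.2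
      exact (Real.rpow_le_rpow ht.1.le hst.le h0).trans (key s hsmem (ht.1.trans hst))
    have hcont : Filter.Tendsto (fun t : ℝ => t ^ c) (nhdsWithin (Qws f ψ w ε r)
        (Set.Iio (Qws f ψ w ε r))) (nhds ((Qws f ψ w ε r) ^ c)) :=
      ((Real.continuousAt_rpow_const _ c (Or.inl hA.ne')).continuousWithinAt)
    refine le_of_tendsto hcont ?_
    filter_upwards [Ioo_mem_nhdsLT hA] with t ht using hIoo t ht
  · have x₀ := Classical.arbitrary X
    have h1 : Real.exp (Sw f ψ w x₀) ≤ Qws f ψ w ε r := exp_le_qws f hM hK w x₀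
    have h2 : (Qws f ψ w ε r) ^ c ≤ (Real.exp (Sw f ψ w x₀)) ^ c :=
      Real.rpow_le_rpow_of_nonpos (Real.exp_pos _) h1 h0.le
    refine h2.trans ?_
    have hkey := key (∑ x ∈ ({x₀} : Finset X), Real.exp (Sw f ψ w x))
      ⟨{x₀}, rSep_singleton f w ε r x₀, rfl⟩
      (by rw [Finset.sum_singleton]; exact Real.exp_pos _)
    rwa [Finset.sum_singleton] at hkey

end Aux4

lemma pse_est {X : Type*} [MetricSpace X] [CompactSpace X] [Nonempty X] {m : ℕ} (hm : 0 < m)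
    (f : Fin m → X → X) (φ : X → ℝ) (hφ : Continuous φ) (r : ℝ) (hr0 : 0 < r)
    (c : ℝ) {ε : ℝ} (hε : 0 < ε) :
    (1 ≤ c → Pse f (fun x => c * φ x) ε r ≤
        (c : EReal) * Pse f φ ε r + (((c - 1) * Real.log m : ℝ) : EReal)) ∧
    (c ≤ 1 → (c : EReal) * Pse f φ ε r + (((c - 1) * Real.log m : ℝ) : EReal) ≤
        Pse f (fun x => c * φ x) ε r) := by
  classical
  obtain ⟨xM, -, hxM⟩ := (isCompact_univ : IsCompact (Set.univ : Set X)).exists_isMaxOn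
    Set.univ_nonempty hφ.abs.continuousOn
  set M := |φ xM| with hMdef
  have hM : ∀ x, |φ x| ≤ M := fun x => hxM (Set.mem_univ x)
  have hM0 : 0 ≤ M := abs_nonneg _
  obtain ⟨K, hK0, hK⟩ := exists_card_bound f hr0 hε
  have hmR : (0:ℝ) < m := by exact_mod_cast hm
  have hNeFm : Nonempty (Fin m) := ⟨⟨0, hm⟩⟩
  have hM' : ∀ x, |c * φ x| ≤ |c| * M := fun x => by
    rw [abs_mul]; exact mul_le_mul_of_nonneg_left (hM x) (abs_nonneg c)
  set u : ℕ → ℝ := fun n => (n:ℝ)⁻¹ * Real.log (Qns f (fun x => c * φ x) n ε r) with hu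
  set v : ℕ → ℝ := fun n => (n:ℝ)⁻¹ * Real.log (Qns f φ n ε r) with hv
  have key : ∀ n : ℕ, 1 ≤ n →
      (-M ≤ v n ∧ v n ≤ Real.log K + M) ∧
      (1 ≤ c → u n ≤ c * v n + (c - 1) * Real.log m) ∧
      (c ≤ 1 → c * v n + (c - 1) * Real.log m ≤ u n) := by
    intro n hn
    have hn0 : (0:ℝ) < n := by exact_mod_cast hn
    have hninv : (0:ℝ) ≤ (n:ℝ)⁻¹ := by positivity
    have hNeσ : Nonempty (Fin n → Fin m) := ⟨fun _ => ⟨0, hm⟩⟩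
    set N : ℝ := (m:ℝ) ^ n with hN
    have hNpos : 0 < N := pow_pos hmR n
    have hQns : ∀ ψ : X → ℝ, Qns f ψ n ε r
        = (1/N) * ∑ σ : Fin n → Fin m, Qws f ψ (List.ofFn σ) ε r := by
      intro ψ; rw [Qns, Fintype.card_fin, hN]
    have hcardσ : (Fintype.card (Fin n → Fin m) : ℝ) = N := by
      rw [Fintype.card_fun, Fintype.card_fin, Fintype.card_fin, hN]; push_cast; rfl
    have hApos : ∀ σ : Fin n → Fin m, 0 < Qws f φ (List.ofFn σ) ε r :=
      fun σ => qws_pos f hM hK _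
    have hsumApos : 0 < ∑ σ : Fin n → Fin m, Qws f φ (List.ofFn σ) ε r :=
      Finset.sum_pos (fun σ _ => hApos σ) Finset.univ_nonempty
    have hQpos : 0 < Qns f φ n ε r := by
      rw [hQns]; exact mul_pos (by positivity) hsumApos
    have hBpos : ∀ σ : Fin n → Fin m, 0 < Qws f (fun x => c * φ x) (List.ofFn σ) ε r :=
      fun σ => qws_pos f hM' hK _
    have hQcpos : 0 < Qns f (fun x => c * φ x) n ε r := by
      rw [hQns]
      exact mul_pos (by positivity) (Finset.sum_pos (fun σ _ => hBpos σ) Finset.univ_nonempty)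
    have hSA : ∑ σ : Fin n → Fin m, Qws f φ (List.ofFn σ) ε r = N * Qns f φ n ε r := by
      rw [hQns]; field_simp
    -- lower bound on v n
    have hQlow : Real.exp (-(n * M)) ≤ Qns f φ n ε r := by
      rw [hQns]
      have hgain : ∀ σ : Fin n → Fin m, Real.exp (-(n * M)) ≤ Qws f φ (List.ofFn σ) ε r := by
        intro σ
        have h := exp_neg_le_qws f hM hK (List.ofFn σ)
        rwa [List.length_ofFn] at h
      have h2 : N * Real.exp (-(n * M)) ≤ ∑ σ : Fin n → Fin m, Qws f φ (List.ofFn σ) ε r := by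
        calc N * Real.exp (-(n * M))
            = ∑ _σ : Fin n → Fin m, Real.exp (-(n * M)) := by
              rw [Finset.sum_const, Finset.card_univ, nsmul_eq_mul, hcardσ]
          _ ≤ _ := Finset.sum_le_sum fun σ _ => hgain σ
      calc Real.exp (-(n * M)) = (1/N) * (N * Real.exp (-(n * M))) := by field_simp
        _ ≤ _ := mul_le_mul_of_nonneg_left h2 (by positivity)
    have hvlow : -M ≤ v n := by
      have h1 : -(n * M) ≤ Real.log (Qns f φ n ε r) := by
        have h := Real.log_le_log (Real.exp_pos _) hQlow
        rwa [Real.log_exp] at h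
      calc -M = (n:ℝ)⁻¹ * (-(n * M)) := by field_simp
        _ ≤ v n := mul_le_mul_of_nonneg_left h1 hninv
    -- upper bound on v n
    have hQhigh : Qns f φ n ε r ≤ (K:ℝ) ^ n * Real.exp (n * M) := by
      rw [hQns]
      have hle : ∀ σ : Fin n → Fin m,
          Qws f φ (List.ofFn σ) ε r ≤ (K:ℝ) ^ n * Real.exp (n * M) := by
        intro σ
        have h := qws_le f hM hK (List.ofFn σ)
        rwa [List.length_ofFn] at h
      have h2 : ∑ σ : Fin n → Fin m, Qws f φ (List.ofFn σ) ε r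
          ≤ N * ((K:ℝ) ^ n * Real.exp (n * M)) := by
        calc ∑ σ : Fin n → Fin m, Qws f φ (List.ofFn σ) ε r
            ≤ ∑ _σ : Fin n → Fin m, (K:ℝ) ^ n * Real.exp (n * M) :=
              Finset.sum_le_sum fun σ _ => hle σ
          _ = N * ((K:ℝ) ^ n * Real.exp (n * M)) := by
              rw [Finset.sum_const, Finset.card_univ, nsmul_eq_mul, hcardσ]
      calc (1/N) * ∑ σ : Fin n → Fin m, Qws f φ (List.ofFn σ) ε r
          ≤ (1/N) * (N * ((K:ℝ) ^ n * Real.exp (n * M))) :=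
            mul_le_mul_of_nonneg_left h2 (by positivity)
        _ = (K:ℝ) ^ n * Real.exp (n * M) := by field_simp
    have hvhigh : v n ≤ Real.log K + M := by
      have h1 : Real.log (Qns f φ n ε r) ≤ Real.log ((K:ℝ) ^ n * Real.exp (n * M)) :=
        Real.log_le_log hQpos hQhigh
      have h2 : Real.log ((K:ℝ) ^ n * Real.exp (n * M)) = n * Real.log K + n * M := by
        rw [Real.log_mul (by positivity) (Real.exp_ne_zero _), Real.log_pow, Real.log_exp]
      rw [h2] at h1
      calc v n ≤ (n:ℝ)⁻¹ * ((n:ℝ) * Real.log K + (n:ℝ) * M) :=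
            mul_le_mul_of_nonneg_left h1 hninv
        _ = Real.log K + M := by field_simp
    refine ⟨⟨hvlow, hvhigh⟩, ?_, ?_⟩
    · intro hc1
      have hsum_le : ∑ σ : Fin n → Fin m, Qws f (fun x => c * φ x) (List.ofFn σ) ε r
          ≤ (∑ σ : Fin n → Fin m, Qws f φ (List.ofFn σ) ε r) ^ c :=
        (Finset.sum_le_sum fun σ _ => qws_smul_le f hM hK hc1 (List.ofFn σ)).trans
          (sum_rpow_le_rpow_sum _ _ (fun σ _ => (hApos σ).le) hc1)
      have hchain : Qns f (fun x => c * φ x) n ε r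
          ≤ (1/N) * (N ^ c * (Qns f φ n ε r) ^ c) := by
        rw [hQns]
        calc (1/N) * ∑ σ : Fin n → Fin m, Qws f (fun x => c * φ x) (List.ofFn σ) ε r
            ≤ (1/N) * ((∑ σ : Fin n → Fin m, Qws f φ (List.ofFn σ) ε r) ^ c) :=
              mul_le_mul_of_nonneg_left hsum_le (by positivity)
          _ = (1/N) * (N ^ c * (Qns f φ n ε r) ^ c) := by
              rw [hSA, Real.mul_rpow hNpos.le hQpos.le]
      have hlog : Real.log (Qns f (fun x => c * φ x) n ε r)
          ≤ (c - 1) * ((n:ℝ) * Real.log m) + c * Real.log (Qns f φ n ε r) := by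
        have h1 := Real.log_le_log hQcpos hchain
        rw [Real.log_mul (one_div_ne_zero hNpos.ne')
            (mul_ne_zero (Real.rpow_pos_of_pos hNpos c).ne' (Real.rpow_pos_of_pos hQpos c).ne'),
          Real.log_mul (Real.rpow_pos_of_pos hNpos c).ne' (Real.rpow_pos_of_pos hQpos c).ne',
          Real.log_rpow hNpos, Real.log_rpow hQpos, one_div, Real.log_inv, hN,
          Real.log_pow] at h1
        linarith
      calc u n = (n:ℝ)⁻¹ * Real.log (Qns f (fun x => c * φ x) n ε r) := rfl
        _ ≤ (n:ℝ)⁻¹ * ((c - 1) * ((n:ℝ) * Real.log m) + c * Real.log (Qns f φ n ε r)) :=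
            mul_le_mul_of_nonneg_left hlog hninv
        _ = c * v n + (c - 1) * Real.log m := by
            rw [hv]; field_simp; ring
    · intro hc1
      have hsum_ge : (∑ σ : Fin n → Fin m, Qws f φ (List.ofFn σ) ε r) ^ c
          ≤ ∑ σ : Fin n → Fin m, Qws f (fun x => c * φ x) (List.ofFn σ) ε r :=
        (rpow_sum_le_sum_rpow _ Finset.univ_nonempty _ (fun σ _ => hApos σ) hc1).trans
          (Finset.sum_le_sum fun σ _ => qws_smul_ge f hM hK hc1 (List.ofFn σ))
      have hchain : (1/N) * (N ^ c * (Qns f φ n ε r) ^ c)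
          ≤ Qns f (fun x => c * φ x) n ε r := by
        rw [hQns (fun x => c * φ x)]
        calc (1/N) * (N ^ c * (Qns f φ n ε r) ^ c)
            = (1/N) * ((∑ σ : Fin n → Fin m, Qws f φ (List.ofFn σ) ε r) ^ c) := by
              rw [hSA, Real.mul_rpow hNpos.le hQpos.le]
          _ ≤ (1/N) * ∑ σ : Fin n → Fin m, Qws f (fun x => c * φ x) (List.ofFn σ) ε r :=
              mul_le_mul_of_nonneg_left hsum_ge (by positivity)
      have hlog : (c - 1) * ((n:ℝ) * Real.log m) + c * Real.log (Qns f φ n ε r)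
          ≤ Real.log (Qns f (fun x => c * φ x) n ε r) := by
        have hpos : 0 < (1/N) * (N ^ c * (Qns f φ n ε r) ^ c) := by
          have := Real.rpow_pos_of_pos hNpos c
          have := Real.rpow_pos_of_pos hQpos c
          positivity
        have h1 := Real.log_le_log hpos hchain
        rw [Real.log_mul (one_div_ne_zero hNpos.ne')
            (mul_ne_zero (Real.rpow_pos_of_pos hNpos c).ne' (Real.rpow_pos_of_pos hQpos c).ne'),
          Real.log_mul (Real.rpow_pos_of_pos hNpos c).ne' (Real.rpow_pos_of_pos hQpos c).ne',
          Real.log_rpow hNpos, Real.log_rpow hQpos, one_div, Real.log_inv, hN,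
          Real.log_pow] at h1
        linarith
      calc c * v n + (c - 1) * Real.log m
          = (n:ℝ)⁻¹ * ((c - 1) * ((n:ℝ) * Real.log m) + c * Real.log (Qns f φ n ε r)) := by
            rw [hv]; field_simp; ring
        _ ≤ (n:ℝ)⁻¹ * Real.log (Qns f (fun x => c * φ x) n ε r) :=
            mul_le_mul_of_nonneg_left hlog hninv
        _ = u n := rfl
  have hev1 : ∀ᶠ n in atTop, -M ≤ v n :=
    Filter.eventually_atTop.2 ⟨1, fun n hn => ((key n hn).1).1⟩
  have hev2 : ∀ᶠ n in atTop, v n ≤ Real.log K + M :=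
    Filter.eventually_atTop.2 ⟨1, fun n hn => ((key n hn).1).2⟩
  constructor
  · intro hc1
    have hub : ∀ᶠ n in atTop, u n ≤ c * v n + (c - 1) * Real.log m :=
      Filter.eventually_atTop.2 ⟨1, fun n hn => ((key n hn).2).1 hc1⟩
    exact limsup_le_affine (by linarith) hub hev1 hev2
  · intro hc1
    have hlb : ∀ᶠ n in atTop, c * v n + (c - 1) * Real.log m ≤ u n :=
      Filter.eventually_atTop.2 ⟨1, fun n hn => ((key n hn).2).2 hc1⟩
    exact affine_le_limsup hlb hev1 hev2

lemma ereal_mul_le_mul_of_nonpos {c : ℝ} (hc : c ≤ 0) {x y : EReal} (hxy : x ≤ y) :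
    (c : EReal) * y ≤ (c : EReal) * x := by
  have h1 : ((-c : ℝ) : EReal) * x ≤ ((-c : ℝ) : EReal) * y :=
    mul_le_mul_of_nonneg_left hxy (EReal.coe_nonneg.2 (neg_nonneg.2 hc))
  have h2 : (c : EReal) = -(((-c : ℝ)) : EReal) := by rw [EReal.coe_neg, neg_neg]
  rw [h2, EReal.neg_mul, EReal.neg_mul, EReal.neg_le_neg_iff]
  exact h1

lemma ps_eq_zero {X : Type*} [MetricSpace X] {m : ℕ} (f : Fin m → X → X) (ψ : X → ℝ) (r : ℝ)
    (h : ∀ n : ℕ, 1 ≤ n → ∀ ε : ℝ, 0 < ε → Qns f ψ n ε r = 0) : Ps f ψ r = 0 := by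
  have hPse : ∀ ε : ℝ, 0 < ε → Pse f ψ ε r = 0 := by
    intro ε hε
    rw [Pse]
    have hev : (fun n : ℕ => (((n:ℝ)⁻¹ * Real.log (Qns f ψ n ε r) : ℝ) : EReal)) =ᶠ[atTop]
        (fun _ => ((0:ℝ) : EReal)) := by
      filter_upwards [Filter.eventually_ge_atTop 1] with n hn
      rw [h n hn ε hε, Real.log_zero, mul_zero]
    rw [limsup_congr hev, limsup_const]
    exact EReal.coe_zero
  apply le_antisymm
  · exact iSup₂_le fun ε hε => (hPse ε hε).le
  · have h1 := le_iSup₂ (f := fun (ε : ℝ) (_ : ε ∈ Set.Ioi (0:ℝ)) => Pse f ψ ε r) 1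
      (Set.mem_Ioi.2 one_pos)
    rw [hPse 1 one_pos] at h1
    exact h1

lemma qws_eq_zero_of_isEmpty {X : Type*} [MetricSpace X] [IsEmpty X] {m : ℕ}
    (f : Fin m → X → X) (ψ : X → ℝ) (w : List (Fin m)) (ε r : ℝ) : Qws f ψ w ε r = 0 := by
  rw [Qws]
  have hset : {s : ℝ | ∃ E : Finset X, rSep f w ε r E ∧ s = ∑ x ∈ E, Real.exp (Sw f ψ w x)}
      = {0} := by
    ext s
    constructor
    · rintro ⟨E, -, rfl⟩
      rw [Finset.eq_empty_of_isEmpty E]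
      simp
    · rintro rfl
      exact ⟨∅, rSep_empty f w ε r, (Finset.sum_empty).symm⟩
  rw [hset, csSup_singleton]

theorem Ps_scaling
    {X : Type*} [MetricSpace X] [CompactSpace X] {m : ℕ}
    (f : Fin m → X → X) (hf : ∀ i, Continuous (f i))
    (φ : X → ℝ) (hφ : Continuous φ)
    (r : ℝ) (hr0 : 0 < r) (hr1 : r < 1) (c : ℝ) :
    (1 ≤ c → Ps f (fun x => c * φ x) r ≤
      (c : EReal) * Ps f φ r + (((c - 1) * Real.log m : ℝ) : EReal)) ∧
    (c ≤ 1 → (c : EReal) * Ps f φ r + (((c - 1) * Real.log m : ℝ) : EReal) ≤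
      Ps f (fun x => c * φ x) r) := by
  classical
  rcases Nat.eq_zero_or_pos m with rfl | hm
  · -- degenerate case m = 0
    have hz : ∀ ψ : X → ℝ, ∀ n : ℕ, 1 ≤ n → ∀ ε : ℝ, 0 < ε → Qns f ψ n ε r = 0 := by
      intro ψ n hn ε hε
      rw [Qns, Fintype.card_fin, Nat.cast_zero, zero_pow (by omega : n ≠ 0)]
      simp
    rw [ps_eq_zero f _ r (hz _), ps_eq_zero f _ r (hz _)]
    constructor <;> intro hc <;>
      simp [Real.log_zero, mul_zero]
  rcases isEmpty_or_nonempty X with hX | hX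
  · -- degenerate case : X empty
    have hz : ∀ ψ : X → ℝ, ∀ n : ℕ, 1 ≤ n → ∀ ε : ℝ, 0 < ε → Qns f ψ n ε r = 0 := by
      intro ψ n hn ε hε
      rw [Qns]
      simp [qws_eq_zero_of_isEmpty]
    rw [ps_eq_zero f _ r (hz _), ps_eq_zero f _ r (hz _)]
    have hlog : 0 ≤ Real.log m := Real.log_nonneg (by exact_mod_cast hm)
    constructor <;> intro hc
    · rw [mul_zero, zero_add]
      exact EReal.coe_nonneg.2 (mul_nonneg (by linarith) hlog)
    · rw [mul_zero, zero_add]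
      have : ((c - 1) * Real.log m : ℝ) ≤ 0 := mul_nonpos_of_nonpos_of_nonneg (by linarith) hlog
      exact_mod_cast this
  -- main case
  constructor
  · intro hc
    refine iSup₂_le fun ε hε => ?_
    have hε' : (0:ℝ) < ε := hε
    calc Pse f (fun x => c * φ x) ε r
        ≤ (c : EReal) * Pse f φ ε r + (((c - 1) * Real.log m : ℝ) : EReal) :=
          (pse_est hm f φ hφ r hr0 c hε').1 hc
      _ ≤ (c : EReal) * Ps f φ r + (((c - 1) * Real.log m : ℝ) : EReal) := by
          refine add_le_add (mul_le_mul_of_nonneg_left ?_ ?_) le_rfl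
          · exact le_iSup₂ (f := fun (ε : ℝ) (_ : ε ∈ Set.Ioi (0:ℝ)) => Pse f φ ε r) ε hε
          · exact EReal.coe_nonneg.2 (by linarith)
  · intro hc
    have hest : ∀ ε : ℝ, 0 < ε →
        (c : EReal) * Pse f φ ε r + (((c - 1) * Real.log m : ℝ) : EReal) ≤
          Ps f (fun x => c * φ x) r := by
      intro ε hε
      refine ((pse_est hm f φ hφ r hr0 c hε).2 hc).trans ?_
      exact le_iSup₂ (f := fun (ε : ℝ) (_ : ε ∈ Set.Ioi (0:ℝ)) =>
        Pse f (fun x => c * φ x) ε r) ε (Set.mem_Ioi.2 hε)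
    rcases le_or_gt c 0 with h0 | h0
    · have h1 : (c : EReal) * Ps f φ r ≤ (c : EReal) * Pse f φ 1 r :=
        ereal_mul_le_mul_of_nonpos h0
          (le_iSup₂ (f := fun (ε : ℝ) (_ : ε ∈ Set.Ioi (0:ℝ)) => Pse f φ ε r) 1
            (Set.mem_Ioi.2 one_pos))
      exact (add_le_add h1 le_rfl).trans (hest 1 one_pos)
    · have hc_pos : (0 : EReal) < ((c:ℝ) : EReal) := by exact_mod_cast h0
      rw [← EReal.le_sub_iff_add_le (Or.inl (EReal.coe_ne_bot _)) (Or.inl (EReal.coe_ne_top _)),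
        EReal.mul_comm, ← EReal.le_div_iff_mul_le hc_pos (EReal.coe_ne_top c)]
      refine iSup₂_le fun ε hε => ?_
      rw [EReal.le_div_iff_mul_le hc_pos (EReal.coe_ne_top c), EReal.mul_comm,
        EReal.le_sub_iff_add_le (Or.inl (EReal.coe_ne_bot _)) (Or.inl (EReal.coe_ne_top _))]
      exact hest ε hε
end
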